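/- If 0 < r < 3, then sup_{x ≥ 0} E^x[ Z_1^{−r} ] < ∞, where Z is a Bessel process of order 3 and E^x denotes expectation for the process started at x. -/

import Mathlib

open MeasureTheory ProbabilityTheory Filter Set
open scoped ENNReal NNReal

noncomputable section

/-- A one-dimensional Brownian motion started at `x`: measurable in `ω`, a.s. continuous
paths, Gaussian increments, and independent increments. -/
def IsBrownianMotionFrom {Ω : Type*} [MeasureSpace Ω] (x : ℝ) (W : ℝ → Ω → ℝ) : Prop :=
  (∀ t : ℝ, Measurable (W t)) ∧
  (∀ᵐ ω ∂(ℙ : Measure Ω), W 0 ω = x) ∧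
  (∀ᵐ ω ∂(ℙ : Measure Ω), Continuous fun t => W t ω) ∧
  (∀ s t : ℝ, 0 ≤ s → s ≤ t →
    Measure.map (fun ω => W t ω - W s ω) ℙ = gaussianReal 0 (Real.toNNReal (t - s))) ∧
  (∀ (n : ℕ) (τ : ℕ → ℝ), Monotone τ → 0 ≤ τ 0 →
    iIndepFun
      (fun (i : Fin n) (ω : Ω) => W (τ (i + 1)) ω - W (τ i) ω) ℙ)

/-- A standard one-dimensional Brownian motion (started at 0). -/
def IsBrownianMotion {Ω : Type*} [MeasureSpace Ω] (W : ℝ → Ω → ℝ) : Prop :=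
  IsBrownianMotionFrom 0 W

/-- `L` is a jointly continuous version of the local times of `W`: for each `z`, `t`
the map `ω ↦ L z t ω` is measurable, a.s. `(z, t) ↦ L z t ω` is continuous and
nonnegative, and the occupation density formula holds. -/
def IsLocalTime {Ω : Type*} [MeasureSpace Ω] (W : ℝ → Ω → ℝ) (L : ℝ → ℝ → Ω → ℝ) : Prop :=
  (∀ z t : ℝ, Measurable (L z t)) ∧
  (∀ᵐ ω ∂(ℙ : Measure Ω), Continuous fun p : ℝ × ℝ => L p.1 p.2 ω) ∧
  (∀ᵐ ω ∂(ℙ : Measure Ω), ∀ z t : ℝ, 0 ≤ L z t ω) ∧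
  (∀ᵐ ω ∂(ℙ : Measure Ω), ∀ t : ℝ, 0 ≤ t → ∀ A : Set ℝ, MeasurableSet A →
    (∫ s in Set.Icc (0:ℝ) t, Set.indicator A (fun _ => (1:ℝ)) (W s ω)) = ∫ z in A, L z t ω)

/-- The inverse local time at 0: `T_r = inf { t > 0 : L⁰_t ≥ r }`. -/
def hitT {Ω : Type*} [MeasureSpace Ω] (L : ℝ → ℝ → Ω → ℝ) (r : ℝ) (ω : Ω) : ℝ :=
  sInf {t : ℝ | 0 < t ∧ r ≤ L 0 t ω}

/-- A three-dimensional Brownian motion started at `y ∈ ℝ³`: each coordinate process is a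
one-dimensional Brownian motion started at the corresponding coordinate of `y`, and the
three coordinate processes are independent. A Bessel process of order 3 started at
`x = ‖y‖` is then `Z_t = ‖X_t‖`. -/
def IsBrownianMotion3 {Ω : Type*} [MeasureSpace Ω] (y : EuclideanSpace ℝ (Fin 3))
    (X : ℝ → Ω → EuclideanSpace ℝ (Fin 3)) : Prop :=
  (∀ i : Fin 3, IsBrownianMotionFrom (y i) (fun t ω => X t ω i)) ∧
  iIndepFun
    (fun (i : Fin 3) (ω : Ω) => fun t : ℝ => X t ω i) ℙ


lemma meas_rpow_neg (r : ℝ) : Measurable fun x : ℝ => x ^ (-r) :=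
  measurable_of_continuousOn_compl_singleton 0 fun x hx =>
    (Real.continuousAt_rpow_const x (-r) (Or.inl hx)).continuousWithinAt

lemma gaussian_one_le_volume (m : ℝ) (s : Set ℝ) :
    gaussianReal m 1 s ≤ volume s := by
  rw [gaussianReal_apply m one_ne_zero s]
  calc ∫⁻ x in s, gaussianPDF m 1 x ≤ ∫⁻ _ in s, 1 := by
        refine setLIntegral_mono measurable_const fun x _ => ?_
        unfold gaussianPDF
        refine ENNReal.ofReal_le_one.2 ?_
        unfold gaussianPDFReal
        have h1 : Real.exp (-(x - m) ^ 2 / (2 * (1:ℝ≥0))) ≤ 1 := by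
          rw [Real.exp_le_one_iff]
          have : (0:ℝ) ≤ (x - m)^2 := sq_nonneg _
          have h2 : (0:ℝ) < 2 * (1:ℝ≥0) := by norm_num
          apply div_nonpos_of_nonpos_of_nonneg <;> nlinarith
        have h2 : (Real.sqrt (2 * Real.pi * (1:ℝ≥0)))⁻¹ ≤ 1 := by
          rw [inv_le_one_iff₀]
          right
          rw [show ((2:ℝ) * Real.pi * (1:ℝ≥0)) = 2 * Real.pi by norm_num]
          nlinarith [Real.pi_gt_three, Real.sq_sqrt (by positivity : (0:ℝ) ≤ 2 * Real.pi),
            Real.sqrt_nonneg (2 * Real.pi)]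
        have h3 : (0:ℝ) ≤ (Real.sqrt (2 * Real.pi * (1:ℝ≥0)))⁻¹ := by positivity
        nlinarith
      _ = volume s := setLIntegral_one s

lemma pi_gauss_bound (r : ℝ) (hr0 : 0 < r) (hr3 : r < 3) (y : Fin 3 → ℝ) :
    ∫⁻ u : Fin 3 → ℝ, ENNReal.ofReal ((Real.sqrt (∑ i, u i ^ 2)) ^ (-r))
        ∂(Measure.pi fun i => gaussianReal (y i) 1)
      ≤ 1 + ENNReal.ofReal ((2:ℝ) ^ (r + 3)) * (1 - ENNReal.ofReal ((2:ℝ) ^ (r - 3)))⁻¹ := by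
  classical
  set π' : Measure (Fin 3 → ℝ) := Measure.pi fun i => gaussianReal (y i) 1 with hπ'
  have : IsProbabilityMeasure π' := by infer_instance
  set g : (Fin 3 → ℝ) → ℝ := fun u => Real.sqrt (∑ i, u i ^ 2) with hgdef
  have hgmeas : Measurable g :=
    Real.continuous_sqrt.measurable.comp
      (Finset.univ.measurable_sum fun i _ => (measurable_pi_apply i).pow_const 2)
  have hg0 : ∀ u, 0 ≤ g u := fun u => Real.sqrt_nonneg _
  set φ : (Fin 3 → ℝ) → ℝ≥0∞ := fun u => ENNReal.ofReal (g u ^ (-r)) with hφdef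
  have hφ : Measurable φ := ((meas_rpow_neg r).comp hgmeas).ennreal_ofReal
  set B : Set (Fin 3 → ℝ) := {u | g u ≤ 1} with hBdef
  have hB : MeasurableSet B := measurableSet_le hgmeas measurable_const
  -- tail bound
  have htail : ∫⁻ u in Bᶜ, φ u ∂π' ≤ 1 := by
    calc ∫⁻ u in Bᶜ, φ u ∂π' ≤ ∫⁻ _ in Bᶜ, 1 ∂π' := by
          refine setLIntegral_mono measurable_const fun u hu => ?_
          have h1 : 1 ≤ g u := le_of_lt (not_le.mp hu)
          exact ENNReal.ofReal_le_one.2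
            (Real.rpow_le_one_of_one_le_of_nonpos h1 (neg_nonpos.2 hr0.le))
        _ = π' Bᶜ := setLIntegral_one _
        _ ≤ 1 := prob_le_one
  -- annuli
  set A : ℕ → Set (Fin 3 → ℝ) := fun n =>
    {u | (2:ℝ) ^ (-((n:ℝ) + 1)) < g u ∧ g u ≤ (2:ℝ) ^ (-(n:ℝ))} with hAdef
  set Z : Set (Fin 3 → ℝ) := {u | g u = 0} with hZdef
  have hZmeas : MeasurableSet Z := hgmeas (measurableSet_singleton 0)
  have hcover : B ⊆ Z ∪ ⋃ n, A n := by
    intro u hu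
    rcases eq_or_lt_of_le (hg0 u) with h0 | h0
    · exact Or.inl h0.symm
    · refine Or.inr (Set.mem_iUnion.2 ?_)
      have hex : ∃ n : ℕ, (2:ℝ) ^ (-((n:ℝ) + 1)) < g u := by
        obtain ⟨k, hk⟩ := exists_pow_lt_of_lt_one h0 (by norm_num : (1:ℝ)/2 < 1)
        refine ⟨k, lt_of_le_of_lt ?_ hk⟩
        calc (2:ℝ) ^ (-((k:ℝ) + 1)) ≤ (2:ℝ) ^ (-(k:ℝ)) :=
              Real.rpow_le_rpow_of_exponent_le one_le_two (by linarith)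
          _ = ((1:ℝ)/2) ^ k := by
              rw [Real.rpow_neg (by norm_num), Real.rpow_natCast, one_div, inv_pow]
      refine ⟨Nat.find hex, Nat.find_spec hex, ?_⟩
      rcases Nat.eq_zero_or_pos (Nat.find hex) with h | h
      · rw [h]
        push_cast
        rw [neg_zero, Real.rpow_zero]
        exact hu
      · have hmin := Nat.find_min hex (Nat.sub_lt h one_pos)
        push_neg at hmin
        have hcast : ((Nat.find hex - 1 : ℕ) : ℝ) + 1 = (Nat.find hex : ℝ) := by
          rw [Nat.cast_sub h]
          push_cast
          ring
        rwa [hcast] at hmin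
  -- zero set contributes nothing
  have hZzero : ∫⁻ u in Z, φ u ∂π' = 0 := by
    have : ∀ u ∈ Z, φ u = 0 := fun u hu => by
      simp only [hφdef]
      rw [show g u = 0 from hu, Real.zero_rpow (neg_ne_zero.2 hr0.ne'), ENNReal.ofReal_zero]
    calc ∫⁻ u in Z, φ u ∂π' = ∫⁻ _ in Z, 0 ∂π' := setLIntegral_congr_fun hZmeas
          this
      _ = 0 := by simp
  -- annulus bound
  have hAnn : ∀ n : ℕ, ∫⁻ u in A n, φ u ∂π'
      ≤ ENNReal.ofReal ((2:ℝ) ^ (r + 3) * ((2:ℝ) ^ (r - 3)) ^ n) := by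
    intro n
    have hstep1 : ∫⁻ u in A n, φ u ∂π'
        ≤ ENNReal.ofReal (((2:ℝ) ^ (-((n:ℝ) + 1))) ^ (-r)) * π' (A n) := by
      rw [← setLIntegral_const]
      refine setLIntegral_mono measurable_const fun u hu => ?_
      refine ENNReal.ofReal_le_ofReal ?_
      exact Real.rpow_le_rpow_of_nonpos (Real.rpow_pos_of_pos two_pos _) hu.1.le
        (neg_nonpos.2 hr0.le)
    have hsubset : A n ⊆ Set.pi univ fun _ : Fin 3 =>
        Set.Icc (-((2:ℝ) ^ (-(n:ℝ)))) ((2:ℝ) ^ (-(n:ℝ))) := by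
      intro u hu i _
      have h1 : |u i| ≤ g u := by
        rw [hgdef, ← Real.sqrt_sq_eq_abs]
        exact Real.sqrt_le_sqrt (Finset.single_le_sum (fun j _ => sq_nonneg (u j))
          (Finset.mem_univ i))
      have := abs_le.mp (h1.trans hu.2)
      exact ⟨this.1, this.2⟩
    have hmeasA : π' (A n) ≤ ENNReal.ofReal (2 * (2:ℝ) ^ (-(n:ℝ))) ^ 3 := by
      calc π' (A n) ≤ π' (Set.pi univ fun _ : Fin 3 =>
            Set.Icc (-((2:ℝ) ^ (-(n:ℝ)))) ((2:ℝ) ^ (-(n:ℝ)))) := measure_mono hsubset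
        _ = ∏ i : Fin 3, gaussianReal (y i) 1
            (Set.Icc (-((2:ℝ) ^ (-(n:ℝ)))) ((2:ℝ) ^ (-(n:ℝ)))) := Measure.pi_pi _ _
        _ ≤ ∏ _i : Fin 3, ENNReal.ofReal (2 * (2:ℝ) ^ (-(n:ℝ))) := by
            refine Finset.prod_le_prod' fun i _ => ?_
            calc gaussianReal (y i) 1 _ ≤ volume (Set.Icc (-((2:ℝ) ^ (-(n:ℝ))))
                  ((2:ℝ) ^ (-(n:ℝ)))) := gaussian_one_le_volume _ _
              _ = ENNReal.ofReal (2 * (2:ℝ) ^ (-(n:ℝ))) := by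
                  rw [Real.volume_Icc]; ring_nf
        _ = ENNReal.ofReal (2 * (2:ℝ) ^ (-(n:ℝ))) ^ 3 := by
            rw [Finset.prod_const]; norm_num
    have harith : ((2:ℝ) ^ (-((n:ℝ) + 1))) ^ (-r) * (2 * (2:ℝ) ^ (-(n:ℝ))) ^ 3
        = (2:ℝ) ^ (r + 3) * ((2:ℝ) ^ (r - 3)) ^ n := by
      rw [← Real.rpow_natCast ((2:ℝ) ^ (r - 3)) n, ← Real.rpow_mul (by norm_num),
        ← Real.rpow_mul (by norm_num),
        show (2:ℝ) * (2:ℝ) ^ (-(n:ℝ)) = (2:ℝ) ^ (1 + -(n:ℝ)) by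
          rw [Real.rpow_add two_pos, Real.rpow_one],
        ← Real.rpow_natCast ((2:ℝ) ^ (1 + -(n:ℝ))) 3, ← Real.rpow_mul (by norm_num),
        ← Real.rpow_add two_pos, ← Real.rpow_add two_pos]
      ring_nf
    calc ∫⁻ u in A n, φ u ∂π'
        ≤ ENNReal.ofReal (((2:ℝ) ^ (-((n:ℝ) + 1))) ^ (-r)) * π' (A n) := hstep1
      _ ≤ ENNReal.ofReal (((2:ℝ) ^ (-((n:ℝ) + 1))) ^ (-r))
          * ENNReal.ofReal (2 * (2:ℝ) ^ (-(n:ℝ))) ^ 3 := by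
          exact mul_le_mul_right hmeasA _
      _ = ENNReal.ofReal ((2:ℝ) ^ (r + 3) * ((2:ℝ) ^ (r - 3)) ^ n) := by
          rw [← ENNReal.ofReal_pow (by positivity), ← ENNReal.ofReal_mul (by positivity),
            harith]
  -- ball bound
  have hball : ∫⁻ u in B, φ u ∂π'
      ≤ ENNReal.ofReal ((2:ℝ) ^ (r + 3)) * (1 - ENNReal.ofReal ((2:ℝ) ^ (r - 3)))⁻¹ := by
    calc ∫⁻ u in B, φ u ∂π' ≤ ∫⁻ u in Z ∪ ⋃ n, A n, φ u ∂π' := lintegral_mono_set hcover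
      _ ≤ ∫⁻ u in Z, φ u ∂π' + ∫⁻ u in ⋃ n, A n, φ u ∂π' := by
          rw [← lintegral_add_measure]
          exact lintegral_mono' (Measure.restrict_union_le _ _) le_rfl
      _ = ∫⁻ u in ⋃ n, A n, φ u ∂π' := by rw [hZzero, zero_add]
      _ ≤ ∑' n, ∫⁻ u in A n, φ u ∂π' := lintegral_iUnion_le _ _
      _ ≤ ∑' n, ENNReal.ofReal ((2:ℝ) ^ (r + 3) * ((2:ℝ) ^ (r - 3)) ^ n) :=
          ENNReal.tsum_le_tsum hAnn
      _ = ENNReal.ofReal ((2:ℝ) ^ (r + 3)) * (1 - ENNReal.ofReal ((2:ℝ) ^ (r - 3)))⁻¹ := by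
          have h1 : ∀ n : ℕ, ENNReal.ofReal ((2:ℝ) ^ (r + 3) * ((2:ℝ) ^ (r - 3)) ^ n)
              = ENNReal.ofReal ((2:ℝ) ^ (r + 3)) * ENNReal.ofReal ((2:ℝ) ^ (r - 3)) ^ n := by
            intro n
            rw [ENNReal.ofReal_mul (by positivity), ENNReal.ofReal_pow (by positivity)]
          simp_rw [h1]
          rw [ENNReal.tsum_mul_left, ENNReal.tsum_geometric]
  calc ∫⁻ u, φ u ∂π' = ∫⁻ u in B, φ u ∂π' + ∫⁻ u in Bᶜ, φ u ∂π' :=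
        (lintegral_add_compl φ hB).symm
    _ ≤ ENNReal.ofReal ((2:ℝ) ^ (r + 3)) * (1 - ENNReal.ofReal ((2:ℝ) ^ (r - 3)))⁻¹ + 1 :=
        add_le_add hball htail
    _ = _ := by rw [add_comm]

/-- Lemma 4.1: if `0 < r < 3`, then `sup_{x ≥ 0} E^x[ Z_1^{−r} ] < ∞` for the Bessel
process `Z` of order 3 (the modulus of a three-dimensional Brownian motion). -/
theorem bessel3_neg_moment_bounded (r : ℝ) (hr0 : 0 < r) (hr3 : r < 3) :
    ∃ C : ℝ≥0∞, C < ⊤ ∧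
      ∀ (Ω : Type) (_ : MeasureSpace Ω), IsProbabilityMeasure (ℙ : Measure Ω) →
        ∀ (y : EuclideanSpace ℝ (Fin 3)) (X : ℝ → Ω → EuclideanSpace ℝ (Fin 3)),
          IsBrownianMotion3 y X →
          ∫⁻ ω, ENNReal.ofReal (‖X 1 ω‖ ^ (-r)) ∂(ℙ : Measure Ω) ≤ C := by
  refine ⟨1 + ENNReal.ofReal ((2:ℝ) ^ (r + 3)) * (1 - ENNReal.ofReal ((2:ℝ) ^ (r - 3)))⁻¹,
    ?_, ?_⟩
  · have hq1 : ENNReal.ofReal ((2:ℝ) ^ (r - 3)) < 1 := by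
      rw [ENNReal.ofReal_lt_one]
      exact Real.rpow_lt_one_of_one_lt_of_neg one_lt_two (by linarith)
    have hinv : (1 - ENNReal.ofReal ((2:ℝ) ^ (r - 3)))⁻¹ ≠ ⊤ := by
      rw [ENNReal.inv_ne_top, ne_eq, tsub_eq_zero_iff_le]
      exact not_le.2 hq1
    exact ENNReal.add_lt_top.2 ⟨ENNReal.one_lt_top,
      ENNReal.mul_lt_top ENNReal.ofReal_lt_top hinv.lt_top⟩
  intro Ω _ hprob y X hX
  obtain ⟨hcoord, hindep⟩ := hX
  have hJ : Measurable (fun ω (i : Fin 3) => X 1 ω i) :=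
    measurable_pi_lambda _ fun i => (hcoord i).1 1
  have hlaw : ∀ i : Fin 3, Measure.map (fun ω => X 1 ω i) ℙ = gaussianReal (y i) 1 := by
    intro i
    have hD : Measurable (fun ω => X 1 ω i - X 0 ω i) := ((hcoord i).1 1).sub ((hcoord i).1 0)
    have hinc : Measure.map (fun ω => X 1 ω i - X 0 ω i) ℙ = gaussianReal 0 1 := by
      have := (hcoord i).2.2.2.1 0 1 le_rfl zero_le_one
      simpa using this
    have hae : (fun ω => X 1 ω i) =ᵐ[ℙ] (fun ω => (X 1 ω i - X 0 ω i) + y i) := by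
      filter_upwards [(hcoord i).2.1] with ω h0
      rw [h0]; ring
    rw [Measure.map_congr hae,
      show (fun ω => (X 1 ω i - X 0 ω i) + y i) = (· + y i) ∘ (fun ω => X 1 ω i - X 0 ω i)
        from rfl,
      ← Measure.map_map (measurable_add_const (y i)) hD, hinc,
      gaussianReal_map_add_const, zero_add]
  have hindep1 : iIndepFun (fun (i : Fin 3) ω => X 1 ω i) ℙ :=
    hindep.comp (fun _ p => p 1) (fun _ => measurable_pi_apply 1)
  have hmap : Measure.map (fun ω (i : Fin 3) => X 1 ω i) ℙ
      = Measure.pi (fun i => gaussianReal (y i) 1) := by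
    refine (Measure.pi_eq fun s hs => ?_).symm
    rw [Measure.map_apply hJ (MeasurableSet.univ_pi hs)]
    have hpre : (fun ω (i : Fin 3) => X 1 ω i) ⁻¹' (Set.pi univ s)
        = ⋂ i ∈ Finset.univ, (fun ω => X 1 ω i) ⁻¹' s i := by
      ext ω; simp [Set.mem_univ_pi]
    rw [hpre, hindep1.measure_inter_preimage_eq_mul Finset.univ (fun i _ => hs i)]
    exact Finset.prod_congr rfl fun i _ => by
      rw [← Measure.map_apply ((hcoord i).1 1) (hs i), hlaw i]
  have hφ : Measurable (fun u : Fin 3 → ℝ =>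
      ENNReal.ofReal ((Real.sqrt (∑ i, u i ^ 2)) ^ (-r))) :=
    ((meas_rpow_neg r).comp (Real.continuous_sqrt.measurable.comp
      (Finset.univ.measurable_sum fun i _ => (measurable_pi_apply i).pow_const 2))).ennreal_ofReal
  calc ∫⁻ ω, ENNReal.ofReal (‖X 1 ω‖ ^ (-r)) ∂(ℙ : Measure Ω)
      = ∫⁻ ω, ENNReal.ofReal ((Real.sqrt (∑ i, X 1 ω i ^ 2)) ^ (-r)) ∂(ℙ : Measure Ω) := by
        refine lintegral_congr fun ω => ?_
        rw [EuclideanSpace.norm_eq]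
        simp only [Real.norm_eq_abs, sq_abs]
    _ = ∫⁻ u : Fin 3 → ℝ, ENNReal.ofReal ((Real.sqrt (∑ i, u i ^ 2)) ^ (-r))
          ∂(Measure.map (fun ω (i : Fin 3) => X 1 ω i) ℙ) := (lintegral_map hφ hJ).symm
    _ = ∫⁻ u : Fin 3 → ℝ, ENNReal.ofReal ((Real.sqrt (∑ i, u i ^ 2)) ^ (-r))
          ∂(Measure.pi fun i => gaussianReal (y i) 1) := by rw [hmap]
    _ ≤ _ := pi_gauss_bound r hr0 hr3 y
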